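/- Fix N ≥ 1, real numbers λ_1, …, λ_N and real numbers c_1, …, c_N with ∑_{k=1}^{N} c_k² = 1, and define for t ∈ ℝ: D(t) = ∑_{k=1}^{N} c_k² e^{2λ_k t}, u_j(t) = c_j e^{λ_j t}/√D(t), and m(t) = ∑_{j=1}^{N} λ_j (u_j(t))². Then each u_j is differentiable and satisfies the ODE u_j'(t) = (λ_j − m(t)) u_j(t) with u_j(0) = c_j, and moreover ∑_{j=1}^{N} (u_j(t))² = 1 for all t. -/

import Mathlib

open Finset

/-- **Moser's formulas solve the eigenvector-component ODE.**
Given `lam : Fin N → ℝ` and weights `c` with `∑ c k ^ 2 = 1`, set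
`D t = ∑ k, c k ^ 2 * exp (2 lam k t)`, `u j t = c j * exp (lam j t) / √(D t)` and
`m t = ∑ j, lam j * (u j t) ^ 2`.  Then each `u j` is differentiable with
`u j ' t = (lam j - m t) * u j t`, `u j 0 = c j`, and `∑ j, (u j t)² = 1` for all `t`. -/
theorem moser_formulas_solve_ODE (N : ℕ) (hN : 1 ≤ N)
    (lam c : Fin N → ℝ) (hc : ∑ k, (c k) ^ 2 = 1)
    (D : ℝ → ℝ) (hD : ∀ t, D t = ∑ k, (c k) ^ 2 * Real.exp (2 * lam k * t))
    (u : Fin N → ℝ → ℝ)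
    (hu : ∀ (j : Fin N) (t : ℝ), u j t = c j * Real.exp (lam j * t) / Real.sqrt (D t))
    (m : ℝ → ℝ) (hm : ∀ t, m t = ∑ j, lam j * (u j t) ^ 2) :
    (∀ (j : Fin N) (t : ℝ), HasDerivAt (u j) ((lam j - m t) * u j t) t) ∧
      (∀ j : Fin N, u j 0 = c j) ∧
      (∀ t : ℝ, ∑ j, (u j t) ^ 2 = 1) := by
  -- some index has c k ≠ 0
  obtain ⟨k0, hk0⟩ : ∃ k, c k ≠ 0 := by
    by_contra h
    push_neg at h
    simp [h] at hc
  have hDpos : ∀ t, 0 < D t := by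
    intro t
    rw [hD]
    refine Finset.sum_pos' (fun k _ => by positivity) ⟨k0, Finset.mem_univ _, ?_⟩
    positivity
  have hsqrt_pos : ∀ t, 0 < Real.sqrt (D t) := fun t => Real.sqrt_pos.2 (hDpos t)
  have hsqrt_sq : ∀ t, Real.sqrt (D t) * Real.sqrt (D t) = D t :=
    fun t => Real.mul_self_sqrt (hDpos t).le
  have husq : ∀ (j : Fin N) (t : ℝ),
      (u j t) ^ 2 = c j ^ 2 * Real.exp (2 * lam j * t) / D t := by
    intro j t
    rw [hu]
    rw [div_pow, Real.sq_sqrt (hDpos t).le, mul_pow, ← Real.exp_nat_mul]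
    ring_nf
  have hsum : ∀ t, ∑ j, (u j t) ^ 2 = 1 := by
    intro t
    simp only [husq]
    rw [← Finset.sum_div, ← hD, div_self (hDpos t).ne']
  -- derivative of D
  have hD' : ∀ t, HasDerivAt D (2 * m t * D t) t := by
    intro t
    have h1 : HasDerivAt (fun s => ∑ k, c k ^ 2 * Real.exp (2 * lam k * s))
        (∑ k, c k ^ 2 * (2 * lam k * Real.exp (2 * lam k * t))) t :=
      HasDerivAt.fun_sum (fun k _ => by
        have h := ((hasDerivAt_id t).const_mul (2 * lam k)).exp.const_mul (c k ^ 2)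
        simpa [mul_comm, mul_assoc, mul_left_comm] using h)
    have h2 : HasDerivAt D (∑ k, c k ^ 2 * (2 * lam k * Real.exp (2 * lam k * t))) t :=
      h1.congr_of_eventuallyEq (Filter.Eventually.of_forall fun s => (hD s))
    convert h2 using 1
    have hmd : m t * D t = ∑ k, lam k * (c k ^ 2 * Real.exp (2 * lam k * t)) := by
      rw [hm, Finset.sum_mul]
      refine Finset.sum_congr rfl fun j _ => ?_
      rw [husq]
      field_simp
      rw [mul_div_assoc, div_self (hDpos t).ne', mul_one]
    rw [mul_assoc, hmd, Finset.mul_sum]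
    exact Finset.sum_congr rfl fun j _ => by ring
  -- derivative of u j
  refine ⟨?_, ?_, hsum⟩
  · intro j t
    have hnum : HasDerivAt (fun s => c j * Real.exp (lam j * s))
        (lam j * (c j * Real.exp (lam j * t))) t := by
      have h := ((hasDerivAt_id t).const_mul (lam j)).exp.const_mul (c j)
      simpa [mul_comm, mul_assoc, mul_left_comm] using h
    have hden : HasDerivAt (fun s => Real.sqrt (D s))
        ((2 * m t * D t) / (2 * Real.sqrt (D t))) t :=
      (hD' t).sqrt (hDpos t).ne'
    have h := hnum.fun_div hden (hsqrt_pos t).ne'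
    have heq : (fun s => c j * Real.exp (lam j * s) / Real.sqrt (D s)) = u j := by
      funext s; rw [hu]
    rw [heq] at h
    refine h.congr_deriv ?_
    rw [hu]
    have hsp := (hsqrt_pos t).ne'
    have h2 : 2 * m t * D t / (2 * Real.sqrt (D t)) = m t * Real.sqrt (D t) := by
      rw [div_eq_iff (by positivity)]
      linear_combination (-2 * m t) * hsqrt_sq t
    rw [h2]
    field_simp
  · intro j
    rw [hu]
    simp [hD, hc]
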